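/- The rational function F_1 = (2x_0 y_1 + x_2^2 − 2x_1 x_3)^3 / (x_3^2 y_1^2) is annihilated by all seven differential operators realizing the coadjoint representation of d_5'; that is, F_1 is an invariant of the coadjoint representation of d_5'. Concretely: (−x_2 ∂_{x_1} − x_3 ∂_{x_2} − y_1 ∂_{x_1}·0 + x_0 ∂_{v_1})F_1 and the analogous operators for X_1, X_2, X_3, Y_1, V_1, V_2 all vanish, where the operators are X̂_i = −C_{ij}^k x_k ∂_{x_j}. -/

import Mathlib

/-- Structure constants of `d_5'` (listed direction); basis
`X_0 ↦ 0, …, X_3 ↦ 3, Y_1 ↦ 4, V_1 ↦ 5, V_2 ↦ 6`. -/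
noncomputable def strD5 (i j s : ℕ) : ℂ :=
  (if i = 0 ∧ (j = 1 ∨ j = 2) ∧ s = j + 1 then 1 else 0) +
  (if i = 1 ∧ j = 2 ∧ s = 4 then 1 else 0) +
  (if i = 5 ∧ j ≤ 3 ∧ s = j then ((j + 1 : ℕ) : ℂ) else 0) +
  (if i = 5 ∧ j = 4 ∧ s = 4 then 5 else 0) +
  (if i = 6 ∧ 1 ≤ j ∧ j ≤ 3 ∧ s = j then 1 else 0) +
  (if i = 6 ∧ j = 4 ∧ s = 4 then 2 else 0)

/-- Antisymmetrized structure constants `C_{ij}^s` of `d_5'`. -/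
noncomputable def CD5 (i j s : ℕ) : ℂ := strD5 i j s - strD5 j i s

/-- Partial derivative `∂F/∂x_j` of a function on the dual, in coordinates. -/
noncomputable def pd (j : ℕ) (F : (ℕ → ℂ) → ℂ) (p : ℕ → ℂ) : ℂ :=
  deriv (fun t => F (Function.update p j t)) (p j)

/-- The differential operator `X̂_i = −C_{ij}^k x_k ∂_{x_j}` realizing the
coadjoint representation of `d_5'`, applied to `F` at the point `p`. -/
noncomputable def opD5 (i : ℕ) (F : (ℕ → ℂ) → ℂ) (p : ℕ → ℂ) : ℂ :=
  ∑ j ∈ Finset.range 7, (-(∑ k ∈ Finset.range 7, CD5 i j k * p k)) * pd j F p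

/-- The rational function `F_1 = (2x_0y_1 + x_2² − 2x_1x_3)³/(x_3²y_1²)`. -/
noncomputable def F1 (p : ℕ → ℂ) : ℂ :=
  (2 * p 0 * p 4 + (p 2) ^ 2 - 2 * p 1 * p 3) ^ 3 / ((p 3) ^ 2 * (p 4) ^ 2)

/-- `F_1` is annihilated by all seven operators `X̂_i = −C_{ij}^k x_k ∂_{x_j}`
realizing the coadjoint representation of `d_5'`; i.e. `F_1` is an invariant of
the coadjoint representation of `d_5'` (on the open set `x_3 y_1 ≠ 0`). -/

lemma deriv_gen (a b c d e f g x : ℂ) (h1 : d*x+e ≠ 0) (h2 : f*x+g ≠ 0) :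
    deriv (fun t => (a*t^2+b*t+c)^3 / ((d*t+e)^2*(f*t+g)^2)) x =
    (3*(a*x^2+b*x+c)^2*(2*a*x+b) * ((d*x+e)^2*(f*x+g)^2)
      - (a*x^2+b*x+c)^3 * (2*(d*x+e)*d*(f*x+g)^2 + (d*x+e)^2*(2*(f*x+g)*f)))
      / ((d*x+e)^2*(f*x+g)^2)^2 := by
  have hN : HasDerivAt (fun t : ℂ => a*t^2+b*t+c) (2*a*x+b) x := by
    have := (((hasDerivAt_pow 2 x).const_mul a).add ((hasDerivAt_id x).const_mul b)).add_const c
    exact this.congr_deriv (by simp only [id, Nat.cast_ofNat]; norm_num; ring)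
  have hD1 : HasDerivAt (fun t : ℂ => (d*t+e)^2) (2*(d*x+e)*d) x := by
    have := (((hasDerivAt_id x).const_mul d).add_const e).pow 2
    exact this.congr_deriv (by simp only [id, Nat.cast_ofNat]; norm_num)
  have hD2 : HasDerivAt (fun t : ℂ => (f*t+g)^2) (2*(f*x+g)*f) x := by
    have := (((hasDerivAt_id x).const_mul f).add_const g).pow 2
    exact this.congr_deriv (by simp only [id, Nat.cast_ofNat]; norm_num)
  have hD := hD1.mul hD2
  have hN3 : HasDerivAt (fun t : ℂ => (a*t^2+b*t+c)^3) (3*(a*x^2+b*x+c)^2*(2*a*x+b)) x := by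
    have := hN.pow 3
    exact this.congr_deriv (by simp only [id, Nat.cast_ofNat])
  have hdiv := hN3.div hD (mul_ne_zero (pow_ne_zero _ h1) (pow_ne_zero _ h2))
  exact hdiv.deriv

lemma pd0 (p : ℕ → ℂ) (h3 : p 3 ≠ 0) (h4 : p 4 ≠ 0) :
    pd 0 F1 p = 6 * p 3 * p 4^2 * (2*p 0*p 4 + p 2^2 - 2*p 1*p 3)^2 / (p 3^3 * p 4^3) := by
  have he : (fun t => F1 (Function.update p 0 t))
      = fun t => ((0:ℂ)*t^2 + (2*p 4)*t + (p 2^2 - 2*p 1*p 3))^3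
        / (((0:ℂ)*t + p 3)^2*((0:ℂ)*t + p 4)^2) := by
    funext t; simp [F1, Function.update_apply]; ring
  rw [pd, he, deriv_gen _ _ _ _ _ _ _ _ (by simpa) (by simpa)]
  simp only [zero_mul, zero_add, one_mul, add_zero, mul_zero]
  field_simp
  ring

lemma pd1 (p : ℕ → ℂ) (h3 : p 3 ≠ 0) (h4 : p 4 ≠ 0) :
    pd 1 F1 p = -6 * p 3^2 * p 4 * (2*p 0*p 4 + p 2^2 - 2*p 1*p 3)^2 / (p 3^3 * p 4^3) := by
  have he : (fun t => F1 (Function.update p 1 t))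
      = fun t => ((0:ℂ)*t^2 + (-2*p 3)*t + (2*p 0*p 4 + p 2^2))^3
        / (((0:ℂ)*t + p 3)^2*((0:ℂ)*t + p 4)^2) := by
    funext t; simp [F1, Function.update_apply]; ring
  rw [pd, he, deriv_gen _ _ _ _ _ _ _ _ (by simpa) (by simpa)]
  simp only [zero_mul, zero_add, one_mul, add_zero, mul_zero]
  field_simp
  ring

lemma pd2 (p : ℕ → ℂ) (h3 : p 3 ≠ 0) (h4 : p 4 ≠ 0) :
    pd 2 F1 p = 6 * p 2 * p 3 * p 4 * (2*p 0*p 4 + p 2^2 - 2*p 1*p 3)^2 / (p 3^3 * p 4^3) := by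
  have he : (fun t => F1 (Function.update p 2 t))
      = fun t => ((1:ℂ)*t^2 + (0:ℂ)*t + (2*p 0*p 4 - 2*p 1*p 3))^3
        / (((0:ℂ)*t + p 3)^2*((0:ℂ)*t + p 4)^2) := by
    funext t; simp [F1, Function.update_apply]; ring
  rw [pd, he, deriv_gen _ _ _ _ _ _ _ _ (by simpa) (by simpa)]
  simp only [zero_mul, zero_add, one_mul, add_zero, mul_zero]
  field_simp
  ring

lemma pd3 (p : ℕ → ℂ) (h3 : p 3 ≠ 0) (h4 : p 4 ≠ 0) :
    pd 3 F1 p = (-6 * p 1 * p 3 * p 4 * (2*p 0*p 4 + p 2^2 - 2*p 1*p 3)^2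
      - 2 * p 4 * (2*p 0*p 4 + p 2^2 - 2*p 1*p 3)^3) / (p 3^3 * p 4^3) := by
  have he : (fun t => F1 (Function.update p 3 t))
      = fun t => ((0:ℂ)*t^2 + (-2*p 1)*t + (2*p 0*p 4 + p 2^2))^3
        / (((1:ℂ)*t + 0)^2*((0:ℂ)*t + p 4)^2) := by
    funext t; simp [F1, Function.update_apply]; ring
  rw [pd, he, deriv_gen _ _ _ _ _ _ _ _ (by simpa) (by simpa)]
  simp only [zero_mul, zero_add, one_mul, add_zero, mul_zero]
  field_simp
  ring

lemma pd4 (p : ℕ → ℂ) (h3 : p 3 ≠ 0) (h4 : p 4 ≠ 0) :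
    pd 4 F1 p = (6 * p 0 * p 3 * p 4 * (2*p 0*p 4 + p 2^2 - 2*p 1*p 3)^2
      - 2 * p 3 * (2*p 0*p 4 + p 2^2 - 2*p 1*p 3)^3) / (p 3^3 * p 4^3) := by
  have he : (fun t => F1 (Function.update p 4 t))
      = fun t => ((0:ℂ)*t^2 + (2*p 0)*t + (p 2^2 - 2*p 1*p 3))^3
        / (((0:ℂ)*t + p 3)^2*((1:ℂ)*t + 0)^2) := by
    funext t; simp [F1, Function.update_apply]; ring
  rw [pd, he, deriv_gen _ _ _ _ _ _ _ _ (by simpa) (by simpa)]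
  simp only [zero_mul, zero_add, one_mul, add_zero, mul_zero]
  field_simp
  ring

lemma pd5 (p : ℕ → ℂ) : pd 5 F1 p = 0 := by
  have he : (fun t => F1 (Function.update p 5 t)) = fun _ => F1 p := by
    funext t; simp [F1, Function.update_apply]
  rw [pd, he, deriv_const]

lemma pd6 (p : ℕ → ℂ) : pd 6 F1 p = 0 := by
  have he : (fun t => F1 (Function.update p 6 t)) = fun _ => F1 p := by
    funext t; simp [F1, Function.update_apply]
  rw [pd, he, deriv_const]

set_option maxHeartbeats 1000000 in
theorem F1_invariant_d5' :
    ∀ p : ℕ → ℂ, p 3 ≠ 0 → p 4 ≠ 0 → ∀ i < 7, opD5 i F1 p = 0 := by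
  intro p h3 h4 i hi
  interval_cases i <;>
  · rw [opD5]
    simp only [Finset.sum_range_succ, Finset.sum_range_zero]
    norm_num [CD5, strD5]
    simp only [pd0 p h3 h4, pd1 p h3 h4, pd2 p h3 h4, pd3 p h3 h4, pd4 p h3 h4,
      pd5 p, pd6 p]
    ring
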